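/- Let α ∈ [0,1] be a real number, let p be a prime and n a positive integer, and let 𝒢 be an elementary abelian p-group of order p^n (i.e., a group of order p^n in which every element g satisfies g^p = identity). Set l = (p^n − 1)/(p − 1). Then αp − 1 is an eigenvalue of A_α(P(𝒢)) whose eigenspace has dimension at least l(p−2), and α + p − 2 is an eigenvalue of A_α(P(𝒢)) whose eigenspace has dimension at least l − 1. -/

import Mathlib

open Matrix Polynomial BigOperators

set_option linter.unusedSectionVars false
set_option linter.unusedVariables false
set_option maxHeartbeats 1000000

/-- The generalized adjacency matrix `A_α(G) = α·D(G) + (1−α)·A(G)`. -/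
noncomputable def Aalpha {V : Type*} [Fintype V] (G : SimpleGraph V) (α : ℝ) :
    Matrix V V ℝ :=
  letI := Classical.decEq V
  letI := Classical.decRel G.Adj
  α • Matrix.diagonal (fun v => (G.degree v : ℝ)) + (1 - α) • G.adjMatrix ℝ

/-- `μ` is an eigenvalue of the real matrix `M`. -/
def Matrix.IsEigenvalue {n : Type*} [Fintype n] (M : Matrix n n ℝ) (μ : ℝ) : Prop :=
  ∃ v : n → ℝ, v ≠ 0 ∧ M.mulVec v = μ • v

/-- The dimension of the eigenspace of a real matrix `M` for the value `μ`. -/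
noncomputable def eigMult {n : Type*} [Fintype n] (M : Matrix n n ℝ) (μ : ℝ) : ℕ :=
  letI := Classical.decEq n
  Module.finrank ℝ (Module.End.eigenspace (Matrix.toLin' M) μ)

/-- The joined union `G[G_1, …, G_n]`. -/
def joinedUnion {n : ℕ} (G : SimpleGraph (Fin n)) (V : Fin n → Type*)
    (Gs : ∀ i, SimpleGraph (V i)) : SimpleGraph (Σ i, V i) :=
  SimpleGraph.fromRel (fun x y =>
    if h : x.1 = y.1 then (Gs y.1).Adj (h ▸ x.2) y.2 else G.Adj x.1 y.1)

/-- The join `G ∇ H` of two graphs. -/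
def graphJoin {V W : Type*} (G : SimpleGraph V) (H : SimpleGraph W) :
    SimpleGraph (V ⊕ W) :=
  SimpleGraph.fromRel (fun x y =>
    match x, y with
    | Sum.inl a, Sum.inl b => G.Adj a b
    | Sum.inr a, Sum.inr b => H.Adj a b
    | _, _ => True)

/-- The disjoint union `G ∪ H` of two graphs. -/
def disjUnion {V W : Type*} (G : SimpleGraph V) (H : SimpleGraph W) :
    SimpleGraph (V ⊕ W) :=
  SimpleGraph.fromRel (fun x y =>
    match x, y with
    | Sum.inl a, Sum.inl b => G.Adj a b
    | Sum.inr a, Sum.inr b => H.Adj a b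
    | _, _ => False)

/-- Degree of a vertex (classical version). -/
noncomputable def gdegree {V : Type*} [Fintype V] (G : SimpleGraph V) (v : V) : ℕ :=
  letI := Classical.decEq V
  letI := Classical.decRel G.Adj
  G.degree v

/-- The power graph of a group. -/
def powerGraph (G : Type*) [Group G] : SimpleGraph G :=
  SimpleGraph.fromRel (fun x y => ∃ k : ℕ, 0 < k ∧ y = x ^ k)

section Aux
open Subgroup Finset

/-! ### Generic linear algebra lemmas -/

lemma indep_of_dual {n ι : Type} [Fintype ι] [DecidableEq ι] (f : ι → (n → ℝ)) (e : ι → n)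
    (h : ∀ i j, f i (e j) = if j = i then 1 else 0) : LinearIndependent ℝ f := by
  classical
  rw [Fintype.linearIndependent_iff]
  intro c hc j
  have h2 := congrFun hc (e j)
  simpa only [Finset.sum_apply, Pi.smul_apply, smul_eq_mul, h, mul_ite, mul_one, mul_zero,
    Finset.sum_ite_eq, Finset.mem_univ, if_true, Pi.zero_apply] using h2

lemma le_eigMult {n : Type} [Fintype n] (M : Matrix n n ℝ) (μ : ℝ)
    {ι : Type} [Fintype ι] (f : ι → (n → ℝ)) (hf : LinearIndependent ℝ f)
    (hev : ∀ i, M.mulVec (f i) = μ • f i) :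
    Fintype.card ι ≤ eigMult M μ := by
  classical
  rw [eigMult]
  set W := Module.End.eigenspace (Matrix.toLin' M) μ with hW
  have hmem : ∀ i, f i ∈ W := fun i => by
    rw [hW, Module.End.mem_eigenspace_iff, Matrix.toLin'_apply, hev]
  have hind : LinearIndependent ℝ (fun i => (⟨f i, hmem i⟩ : W)) := by
    apply LinearIndependent.of_comp W.subtype
    exact hf
  exact hind.fintype_card_le_finrank

/-! ### Group-theoretic lemmas -/

variable {G : Type} [CommGroup G] [Fintype G] {p : ℕ}

lemma aux_orderOf (hp : p.Prime) (helem : ∀ g : G, g ^ p = 1) {x : G} (hx : x ≠ 1) :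
    orderOf x = p := by
  haveI : Fact p.Prime := ⟨hp⟩
  exact orderOf_eq_prime (helem x) hx

lemma aux_zpow_eq (hp : p.Prime) (helem : ∀ g : G, g ^ p = 1) {x y : G} (hx : x ≠ 1) (hy : y ≠ 1)
    (h : y ∈ zpowers x) : zpowers y = zpowers x := by
  apply Subgroup.eq_of_le_of_card_ge (zpowers_le.mpr h)
  rw [Nat.card_zpowers, Nat.card_zpowers, aux_orderOf hp helem hx, aux_orderOf hp helem hy]

lemma aux_mem_iff (hp : p.Prime) (helem : ∀ g : G, g ^ p = 1) {x y : G} (hx : x ≠ 1) (hy : y ≠ 1) :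
    y ∈ zpowers x ↔ zpowers y = zpowers x :=
  ⟨aux_zpow_eq hp helem hx hy, fun h => h ▸ mem_zpowers y⟩

lemma aux_pow_iff {x y : G} :
    (∃ k : ℕ, 0 < k ∧ y = x ^ k) ↔ y ∈ zpowers x := by
  constructor
  · rintro ⟨k, -, rfl⟩; exact zpow_natCast x k ▸ zpow_mem (mem_zpowers x) _
  · intro h
    obtain ⟨k, hk⟩ := ((isOfFinOrder_of_finite x).mem_powers_iff_mem_zpowers.mpr h)
    rcases Nat.eq_zero_or_pos k with rfl | hkpos
    · exact ⟨orderOf x, (orderOf_pos x), by rw [pow_orderOf_eq_one]; exact hk ▸ (pow_zero x)⟩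
    · exact ⟨k, hkpos, hk.symm⟩

lemma adj_iff {x y : G} :
    (powerGraph G).Adj x y ↔ x ≠ y ∧ (y ∈ zpowers x ∨ x ∈ zpowers y) := by
  rw [powerGraph, SimpleGraph.fromRel_adj, aux_pow_iff, aux_pow_iff]

lemma adj_one {y : G} : (powerGraph G).Adj 1 y ↔ y ≠ 1 := by
  rw [adj_iff]
  exact ⟨fun h => h.1.symm, fun h => ⟨h.symm, Or.inr (one_mem _)⟩⟩

lemma adj_ne_one (hp : p.Prime) (helem : ∀ g : G, g ^ p = 1) {x y : G} (hx : x ≠ 1) :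
    (powerGraph G).Adj x y ↔ y ≠ x ∧ y ∈ zpowers x := by
  rw [adj_iff]
  rcases eq_or_ne y 1 with rfl | hy
  · simp [hx, Ne.symm hx, one_mem]
  · constructor
    · rintro ⟨hne, h | h⟩
      · exact ⟨hne.symm, h⟩
      · exact ⟨hne.symm, (aux_zpow_eq hp helem hy hx h) ▸ mem_zpowers y⟩
    · rintro ⟨hne, h⟩; exact ⟨hne.symm, Or.inl h⟩

/-! ### Representatives of cyclic subgroups -/

noncomputable def rep0 (G : Type) [CommGroup G] (H : Subgroup G) : G :=
  letI := Classical.propDecidable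
  if h : ∃ y, y ∈ H ∧ y ≠ 1 then h.choose else 1

noncomputable def rep {G : Type} [CommGroup G] (x : G) : G := rep0 G (Subgroup.zpowers x)

lemma rep_spec {x : G} (hx : x ≠ 1) : rep x ∈ zpowers x ∧ rep x ≠ 1 := by
  have h : ∃ y, y ∈ zpowers x ∧ y ≠ 1 := ⟨x, mem_zpowers x, hx⟩
  rw [rep, rep0, dif_pos h]
  exact h.choose_spec

lemma rep_congr {x y : G} (h : zpowers x = zpowers y) : rep x = rep y := by
  rw [rep, rep, h]

lemma rep_zpowers (hp : p.Prime) (helem : ∀ g : G, g ^ p = 1) {x : G} (hx : x ≠ 1) :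
    zpowers (rep x) = zpowers x :=
  aux_zpow_eq hp helem hx (rep_spec hx).2 (rep_spec hx).1

lemma rep_idem (hp : p.Prime) (helem : ∀ g : G, g ^ p = 1) {x : G} (hx : x ≠ 1) :
    rep (rep x) = rep x :=
  rep_congr (rep_zpowers hp helem hx)

lemma rep_eq_iff (hp : p.Prime) (helem : ∀ g : G, g ^ p = 1) {x r : G} (hx : x ≠ 1)
    (hr1 : r ≠ 1) (hr : rep r = r) : rep x = r ↔ x ∈ zpowers r := by
  constructor
  · intro h
    have h1 : r ∈ zpowers x := h ▸ (rep_spec hx).1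
    exact (aux_zpow_eq hp helem hx hr1 h1) ▸ mem_zpowers x
  · intro h
    rw [rep_congr (aux_zpow_eq hp helem hr1 hx h), hr]

/-! ### Neighborhoods and degrees in the power graph -/

section Dec
variable [DecidableEq G] [DecidableRel (powerGraph G).Adj]

lemma nbhd_one : (powerGraph G).neighborFinset (1 : G) = univ.erase 1 := by
  ext y
  simp [SimpleGraph.mem_neighborFinset, adj_one]

lemma nbhd_ne_one (hp : p.Prime) (helem : ∀ g : G, g ^ p = 1) {x : G} (hx : x ≠ 1) :
    (powerGraph G).neighborFinset x = (univ.filter (· ∈ zpowers x)).erase x := by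
  ext y
  simp [SimpleGraph.mem_neighborFinset, adj_ne_one hp helem hx]

lemma card_zp_filter (hp : p.Prime) (helem : ∀ g : G, g ^ p = 1) {x : G} (hx : x ≠ 1) :
    (univ.filter (· ∈ zpowers x)).card = p := by
  rw [← Fintype.card_subtype, ← Nat.card_eq_fintype_card, Nat.card_zpowers,
    aux_orderOf hp helem hx]

lemma deg_ne_one (hp : p.Prime) (helem : ∀ g : G, g ^ p = 1) {x : G} (hx : x ≠ 1) :
    (powerGraph G).degree x = p - 1 := by
  rw [← SimpleGraph.card_neighborFinset_eq_degree, nbhd_ne_one hp helem hx,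
    card_erase_of_mem (by simp [mem_zpowers]), card_zp_filter hp helem hx]

lemma clique_eq {x : G} :
    univ.filter (fun y => y ≠ 1 ∧ y ∈ zpowers x) = (univ.filter (· ∈ zpowers x)).erase 1 := by
  ext y
  simp [and_comm]

lemma clique_card (hp : p.Prime) (helem : ∀ g : G, g ^ p = 1) {x : G} (hx : x ≠ 1) :
    (univ.filter (fun y => y ≠ 1 ∧ y ∈ zpowers x)).card = p - 1 := by
  rw [clique_eq, card_erase_of_mem (by simp [one_mem]), card_zp_filter hp helem hx]

end Dec

/-! ### The matrix expansion -/

lemma aalpha_apply {V : Type} [Fintype V] (Gr : SimpleGraph V) (α : ℝ) (v : V → ℝ) (x : V) :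
    letI := Classical.decEq V
    letI := Classical.decRel Gr.Adj
    (Aalpha Gr α).mulVec v x
      = α * (Gr.degree x) * v x + (1 - α) * ∑ y ∈ Gr.neighborFinset x, v y := by
  letI := Classical.decEq V
  letI := Classical.decRel Gr.Adj
  rw [Aalpha, Matrix.add_mulVec, Matrix.smul_mulVec, Matrix.smul_mulVec]
  simp only [Pi.add_apply, Pi.smul_apply, Matrix.mulVec_diagonal,
    SimpleGraph.adjMatrix_mulVec_apply, smul_eq_mul]
  ring

/-! ### Eigenvector lemmas -/

lemma eig1 (hp : p.Prime) (helem : ∀ g : G, g ^ p = 1) {α : ℝ} {g : G} (hg : g ≠ 1)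
    (v : G → ℝ) (hsupp : ∀ x, v x ≠ 0 → x ≠ 1 ∧ x ∈ zpowers g)
    (hsum : ∑ x, v x = 0) :
    (Aalpha (powerGraph G) α).mulVec v = (α * p - 1) • v := by
  classical
  have hv1 : v 1 = 0 := by
    by_contra h; exact (hsupp 1 h).1 rfl
  funext x
  rw [aalpha_apply, Pi.smul_apply, smul_eq_mul]
  rcases eq_or_ne x 1 with rfl | hx
  · rw [nbhd_one, Finset.sum_erase_eq_sub (mem_univ 1), hsum, hv1]
    ring
  rcases Classical.em (x ∈ zpowers g) with hmem | hmem
  · have hzp : zpowers x = zpowers g := aux_zpow_eq hp helem hg hx hmem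
    have hfilter : ∑ y ∈ univ.filter (· ∈ zpowers x), v y = 0 := by
      rw [Finset.sum_filter_of_ne (fun y _ hy => by rw [hzp]; exact (hsupp y hy).2)]
      exact hsum
    rw [nbhd_ne_one hp helem hx,
      Finset.sum_erase_eq_sub (by simp [mem_zpowers]), hfilter,
      deg_ne_one hp helem hx, Nat.cast_sub hp.one_le, Nat.cast_one]
    ring
  · have hvx : v x = 0 := by
      by_contra h; exact hmem (hsupp x h).2
    have hzero : ∑ y ∈ ((univ.filter (· ∈ zpowers x)).erase x), v y = 0 := by
      apply Finset.sum_eq_zero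
      intro y hy
      by_contra h
      obtain ⟨hy1, hyg⟩ := hsupp y h
      have hyx : y ∈ zpowers x := (Finset.mem_filter.mp (Finset.mem_of_mem_erase hy)).2
      apply hmem
      have h1 : zpowers y = zpowers x := aux_zpow_eq hp helem hx hy1 hyx
      have h2 : zpowers y = zpowers g := aux_zpow_eq hp helem hg hy1 hyg
      rw [← h2, h1]
      exact mem_zpowers x
    rw [nbhd_ne_one hp helem hx, hzero, hvx]
    ring

lemma eig2 (hp : p.Prime) (helem : ∀ g : G, g ^ p = 1) {α : ℝ}
    (v : G → ℝ) (hv1 : v 1 = 0) (hsum : ∑ x, v x = 0)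
    (hconst : ∀ x y : G, x ≠ 1 → y ∈ zpowers x → y ≠ 1 → v y = v x) :
    (Aalpha (powerGraph G) α).mulVec v = (α + p - 2) • v := by
  classical
  funext x
  rw [aalpha_apply, Pi.smul_apply, smul_eq_mul]
  rcases eq_or_ne x 1 with rfl | hx
  · rw [nbhd_one, Finset.sum_erase_eq_sub (mem_univ 1), hsum, hv1]
    ring
  · have hone : (1 : G) ∈ univ.filter (· ∈ zpowers x) := by simp [one_mem]
    have hfs : ∑ y ∈ univ.filter (· ∈ zpowers x), v y = ((p : ℝ) - 1) * v x := by
      rw [← Finset.add_sum_erase _ v hone, hv1, zero_add]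
      have hcongr : ∑ y ∈ (univ.filter (· ∈ zpowers x)).erase 1, v y
          = ∑ y ∈ (univ.filter (· ∈ zpowers x)).erase 1, v x := by
        refine Finset.sum_congr rfl (fun y hy => ?_)
        have hy1 : y ≠ 1 := Finset.ne_of_mem_erase hy
        have hyx : y ∈ zpowers x := (Finset.mem_filter.mp (Finset.mem_of_mem_erase hy)).2
        exact hconst x y hx hyx hy1
      rw [hcongr, Finset.sum_const, Finset.card_erase_of_mem hone,
        card_zp_filter hp helem hx, nsmul_eq_mul, Nat.cast_sub hp.one_le, Nat.cast_one]
    rw [nbhd_ne_one hp helem hx,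
      Finset.sum_erase_eq_sub (by simp [mem_zpowers]), hfs,
      deg_ne_one hp helem hx, Nat.cast_sub hp.one_le, Nat.cast_one]
    ring

end Aux

section Main
open Subgroup Finset

theorem stmt_16 {α : ℝ} (hα : α ∈ Set.Icc (0 : ℝ) 1)
    (p n : ℕ) (hp : p.Prime) (hn : 1 ≤ n)
    (G : Type) [CommGroup G] [Fintype G]
    (hcard : Fintype.card G = p ^ n) (helem : ∀ g : G, g ^ p = 1)
    (l : ℕ) (hl : l = (p ^ n - 1) / (p - 1)) :
    l * (p - 2) ≤ eigMult (Aalpha (powerGraph G) α) (α * (p : ℝ) - 1) ∧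
    l - 1 ≤ eigMult (Aalpha (powerGraph G) α) (α + (p : ℝ) - 2) := by
  classical
  have hp2 : 2 ≤ p := hp.two_le
  have hcard2 : 1 < Fintype.card G := by
    rw [hcard]
    exact Nat.one_lt_pow (by omega) (by omega)
  haveI : Nontrivial G := Fintype.one_lt_card_iff_nontrivial.mp hcard2
  obtain ⟨g0, hg0⟩ := exists_ne (1 : G)
  set r0 := rep g0 with hr0def
  have hr0 : r0 ≠ 1 := (rep_spec hg0).2
  have hr0rep : rep r0 = r0 := rep_idem hp helem hg0
  set R : Finset G := univ.filter (fun r : G => r ≠ 1 ∧ rep r = r) with hR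
  have hr0R : r0 ∈ R := by simp [hR, hr0, hr0rep]
  -- counting
  have hne_card : (univ.filter (· ≠ (1:G))).card = p ^ n - 1 := by
    rw [filter_ne', card_erase_of_mem (mem_univ 1), card_univ, hcard]
  have hfib : (univ.filter (· ≠ (1:G))).card = R.card * (p - 1) := by
    rw [Finset.card_eq_sum_card_fiberwise (f := rep) (t := R) (fun x hx => by
      have hx1 : x ≠ 1 := by simpa using hx
      simp [hR, (rep_spec hx1).2, rep_idem hp helem hx1])]
    rw [Finset.sum_const_nat (m := p - 1) (fun r hr => ?_)]
    obtain ⟨hr1, hrrep⟩ : r ≠ 1 ∧ rep r = r := by simpa [hR] using hr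
    rw [Finset.filter_filter]
    have heq : univ.filter (fun x : G => x ≠ 1 ∧ rep x = r)
        = univ.filter (fun y : G => y ≠ 1 ∧ y ∈ zpowers r) := by
      ext y
      simp only [mem_filter, mem_univ, true_and]
      exact and_congr_right (fun hy => rep_eq_iff hp helem hy hr1 hrrep)
    rw [heq, clique_card hp helem hr1]
  have hRl : R.card = l := by
    have h1 : R.card * (p - 1) = p ^ n - 1 := hfib.symm.trans hne_card
    rw [hl, ← h1, Nat.mul_div_cancel _ (by omega : 0 < p - 1)]
  have hpn1 : p ^ n - 1 = l * (p - 1) := by rw [← hRl, ← hfib, hne_card]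
  have hmulsub : l * (p - 1) = l * (p - 2) + l := by
    rw [show p - 1 = (p - 2) + 1 from by omega, Nat.mul_succ]
  constructor
  · -- first eigenvalue
    set f1 : {x : G // x ≠ 1 ∧ rep x ≠ x} → G → ℝ :=
      fun i y => (if y = ↑i then (1:ℝ) else 0) - (if y = rep ↑i then 1 else 0) with hf1
    have hdual : ∀ i j : {x : G // x ≠ 1 ∧ rep x ≠ x},
        f1 i (↑j : G) = if j = i then 1 else 0 := by
      intro i j
      by_cases hji : j = i
      · subst hji
        have h2 : (↑j : G) ≠ rep ↑j := Ne.symm j.2.2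
        simp [hf1, h2]
      · have h1 : (↑j : G) ≠ ↑i := fun h => hji (Subtype.ext h)
        have h2 : (↑j : G) ≠ rep ↑i := by
          intro h
          apply j.2.2
          rw [h, rep_idem hp helem i.2.1, ← h]
        simp [hf1, h1, h2, hji]
    have hind := indep_of_dual f1 (fun i => ↑i) hdual
    have hev : ∀ i, (Aalpha (powerGraph G) α).mulVec (f1 i) = (α * p - 1) • f1 i := by
      intro i
      apply eig1 hp helem i.2.1
      · intro x hx
        rcases eq_or_ne x (↑i : G) with rfl | h1
        · exact ⟨i.2.1, mem_zpowers _⟩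
        · rcases eq_or_ne x (rep (↑i : G)) with rfl | h2
          · exact ⟨(rep_spec i.2.1).2, (rep_spec i.2.1).1⟩
          · exact absurd (by simp [hf1, h1, h2]) hx
      · have hne : (↑i : G) ≠ rep ↑i := Ne.symm i.2.2
        rw [hf1]
        rw [Finset.sum_sub_distrib]
        simp [Finset.sum_ite_eq', mem_univ]
    have hle := le_eigMult _ _ f1 hind hev
    have hcardi : Fintype.card {x : G // x ≠ 1 ∧ rep x ≠ x}
        = (univ.filter (fun x : G => x ≠ 1 ∧ rep x ≠ x)).card := Fintype.card_subtype _
    have hsum2 := Finset.card_filter_add_card_filter_not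
      (s := univ.filter (· ≠ (1:G))) (p := fun x => rep x ≠ x)
    rw [Finset.filter_filter, Finset.filter_filter] at hsum2
    simp only [not_not] at hsum2
    have hR2 : (univ.filter (fun a : G => a ≠ 1 ∧ rep a = a)).card = R.card := by
      rw [hR]
    rw [hR2, hRl, hne_card, hpn1, hmulsub] at hsum2
    have hA : (univ.filter (fun x : G => x ≠ 1 ∧ rep x ≠ x)).card = l * (p - 2) := by omega
    rw [hcardi, hA] at hle
    exact hle
  · -- second eigenvalue
    set f2 : {r : G // (r ≠ 1 ∧ rep r = r) ∧ r ≠ r0} → G → ℝ :=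
      fun r y => (if y ≠ 1 ∧ y ∈ zpowers (↑r : G) then (1:ℝ) else 0)
        - (if y ≠ 1 ∧ y ∈ zpowers r0 then 1 else 0) with hf2
    have hmemr : ∀ (r s : {r : G // (r ≠ 1 ∧ rep r = r) ∧ r ≠ r0}),
        ((↑s : G) ∈ zpowers (↑r : G)) ↔ s = r := by
      intro r s
      constructor
      · intro h
        have hz : zpowers (↑s : G) = zpowers (↑r : G) :=
          aux_zpow_eq hp helem r.2.1.1 s.2.1.1 h
        have : rep (↑s : G) = rep (↑r : G) := rep_congr hz
        rw [s.2.1.2, r.2.1.2] at this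
        exact Subtype.ext this
      · rintro rfl; exact mem_zpowers _
    have hnotr0 : ∀ (s : {r : G // (r ≠ 1 ∧ rep r = r) ∧ r ≠ r0}),
        (↑s : G) ∉ zpowers r0 := by
      intro s h
      apply s.2.2
      have hz : zpowers (↑s : G) = zpowers r0 := aux_zpow_eq hp helem hr0 s.2.1.1 h
      have : rep (↑s : G) = rep r0 := rep_congr hz
      rw [s.2.1.2, hr0rep] at this
      exact this
    have hdual : ∀ r s : {r : G // (r ≠ 1 ∧ rep r = r) ∧ r ≠ r0},
        f2 r (↑s : G) = if s = r then 1 else 0 := by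
      intro r s
      by_cases hsr : s = r
      · subst hsr
        simp [hf2, s.2.1.1, mem_zpowers, hnotr0 s]
      · have h1 : (↑s : G) ∉ zpowers (↑r : G) := fun h => hsr ((hmemr r s).mp h)
        simp [hf2, h1, hnotr0 s, hsr]
    have hind := indep_of_dual f2 (fun s => ↑s) hdual
    have hev : ∀ r, (Aalpha (powerGraph G) α).mulVec (f2 r) = (α + p - 2) • f2 r := by
      intro r
      apply eig2 hp helem
      · simp [hf2]
      · rw [hf2, Finset.sum_sub_distrib]
        rw [Finset.sum_boole, Finset.sum_boole]
        rw [clique_card hp helem r.2.1.1, clique_card hp helem hr0, sub_self]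
      · intro x y hx hyx hy1
        have hz : zpowers y = zpowers x := aux_zpow_eq hp helem hx hy1 hyx
        have h1 : (y ∈ zpowers (↑r : G)) ↔ (x ∈ zpowers (↑r : G)) := by
          rw [aux_mem_iff hp helem r.2.1.1 hy1, aux_mem_iff hp helem r.2.1.1 hx, hz]
        have h2 : (y ∈ zpowers r0) ↔ (x ∈ zpowers r0) := by
          rw [aux_mem_iff hp helem hr0 hy1, aux_mem_iff hp helem hr0 hx, hz]
        simp [hf2, h1, h2, hx, hy1]
    have hle := le_eigMult _ _ f2 hind hev
    have hcardi : Fintype.card {r : G // (r ≠ 1 ∧ rep r = r) ∧ r ≠ r0}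
        = (univ.filter (fun r : G => (r ≠ 1 ∧ rep r = r) ∧ r ≠ r0)).card :=
      Fintype.card_subtype _
    have hfe : univ.filter (fun r : G => (r ≠ 1 ∧ rep r = r) ∧ r ≠ r0) = R.erase r0 := by
      ext a
      simp [hR, and_comm]
    rw [hcardi, hfe, card_erase_of_mem hr0R, hRl] at hle
    exact hle

end Main
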